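/- Let x^1,…,x^p be surjective maps with x^i ∈ ST_{n_i}^{r_i} indecomposable for every 1 ≤ i ≤ p, and let f ∈ Sh^•(r_1,…,r_p). If there exist surjections y^1,…,y^q such that f∘(x^1×…×x^p) = y^1·y^2·…·y^q, then q ≤ p. -/

import Mathlib

open scoped TensorProduct

namespace SurjPerm

/-- The maximal value of a word (the `r` such that a surjection lands in `{1,…,r}`). -/
def rk (l : List ℕ) : ℕ := l.foldr max 0

/-- `l` is (the list of values of) a surjective map `{1,…,n} → {1,…,r}`
    with `n = l.length ≥ 1` and `r = rk l`. -/
def IsST (l : List ℕ) : Prop := l ≠ [] ∧ ∀ k, k ∈ l ↔ 1 ≤ k ∧ k ≤ rk l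

/-- membership in `ST_n^r`. -/
def memST (l : List ℕ) (n r : ℕ) : Prop := IsST l ∧ l.length = n ∧ rk l = r

/-- concatenation `x × y`. -/
def cat (x y : List ℕ) : List ℕ := x ++ y.map (· + rk x)

/-- iterated concatenation `x¹ × x² × … × xᵖ`. -/
def catAll (l : List (List ℕ)) : List ℕ := l.foldr cat []

/-- standardization of a word. -/
def stdList (l : List ℕ) : List ℕ := l.map fun v => (l.dedup.filter (· ≤ v)).length

/-- corestriction `x|^K`. -/
def corestrict (x : List ℕ) (K : Finset ℕ) : List ℕ := stdList (x.filter (· ∈ K))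

/-- the `i`-th entry of a word, `1`-indexed: `ent f i = f(i)`. -/
def ent (l : List ℕ) (i : ℕ) : ℕ := l.getD (i - 1) 0

/-- composition `f ∘ x` of the map (word) `f` with the map (word) `x`. -/
def wcomp (f x : List ℕ) : List ℕ := x.map fun v => ent f v

/-- the identity permutation `1_n` as a word. -/
def idW (n : ℕ) : List ℕ := (List.range n).map (· + 1)

/-- the permutation `ε(r₁,…,r_p)` as a word: the `i`-th block of positions
    carries the values shifted above all later blocks. -/
def epsW : List ℕ → List ℕ
  | [] => []
  | r :: rs => ((List.range r).map (· + rs.sum + 1)) ++ epsW rs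

/-- `x \ y := ε(r,s) ∘ (x × y)`. -/
def bsl (x y : List ℕ) : List ℕ := wcomp (epsW [rk x, rk y]) (cat x y)

/-- `f` is strictly increasing on each block of the composition `ns`. -/
def blockIncr (ns f : List ℕ) : Prop :=
  ∀ k, k < ns.length → ∀ i j, (ns.take k).sum < i → i < j → j ≤ (ns.take (k + 1)).sum →
    ent f i < ent f j

/-- `(n₁,…,n_p)`-stuffles. -/
def IsStuffle (ns f : List ℕ) : Prop := IsST f ∧ f.length = ns.sum ∧ blockIncr ns f

/-- `(n₁,…,n_p)`-shuffles: stuffles which are permutations. -/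
def IsShuffle (ns f : List ℕ) : Prop := IsStuffle ns f ∧ rk f = ns.sum

/-- irreducible surjections. -/
def Irr (l : List ℕ) : Prop := IsST l ∧ ¬ ∃ g h, IsST g ∧ IsST h ∧ l = cat g h

/-- the set of irreducible surjections of arity `n`. -/
def IrrN (n : ℕ) : Set (List ℕ) := {l | Irr l ∧ l.length = n}

/-- the product `x · y` on surjections. -/
def dotW (x y : List ℕ) : List ℕ :=
  x.map (fun v => if v < rk x then v else rk x + rk y - 1) ++
    y.map (fun v => if v < rk y then v + rk x - 1 else rk x + rk y - 1)

/-- iterated `·` product `x¹ · x² · … · xᵖ`. -/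
def dotAll : List (List ℕ) → List ℕ
  | [] => []
  | a :: as => as.foldl dotW a

/-- indecomposable surjections (for the `·` product). -/
def Indec (l : List ℕ) : Prop := IsST l ∧ ¬ ∃ a b, IsST a ∧ IsST b ∧ l = dotW a b

/-- the set `𝒟`. -/
def inD (x : List ℕ) : Prop :=
  IsST x ∧ ((x = [1] ∨ x = [1, 1]) ∨
    (3 ≤ x.length ∧ Irr x ∧
      ¬ ∃ y z, ∃ _ : y.length < x.length, inD y ∧ IsST z ∧ x = bsl y z))
termination_by x.length
decreasing_by assumption

/-- the set `𝒞`. -/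
def inC (x : List ℕ) : Prop :=
  Irr x ∧
    ((∃ y z, ∃ _ : y.length < x.length, Irr y ∧ ¬ inC y ∧ IsST z ∧ x = bsl y z) ∨
      (∃ a b, IsST a ∧ IsST b ∧ x = dotW a b))
termination_by x.length
decreasing_by assumption

/-- the set `𝔅(l)`, with `𝔅(0) = 𝒟`. -/
def inBfrak (l : ℕ) (x : List ℕ) : Prop :=
  if l = 0 then inD x else ∃ u v, inD u ∧ IsST v ∧ v.length = l ∧ x = bsl u v

/-- `t_i ∘ f`: exchange the values `i` and `i+1`. -/
def swapVal (i : ℕ) (l : List ℕ) : List ℕ :=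
  l.map fun v => if v = i then i + 1 else if v = i + 1 then i else v

/-- covering relation of the weak Bruhat order on `ST_n^r`:
    `f < t_i ∘ f` whenever `f⁻¹(i) < f⁻¹(i+1)`. -/
def wBCov (f g : List ℕ) : Prop :=
  ∃ i, 1 ≤ i ∧ i + 1 ≤ rk f ∧ g = swapVal i f ∧
    ∀ a b, a < f.length → b < f.length → f.getD a 0 = i → f.getD b 0 = i + 1 → a < b

/-- strict weak Bruhat order. -/
def wBlt : List ℕ → List ℕ → Prop := Relation.TransGen wBCov

/-- weak Bruhat order. -/
def wBle : List ℕ → List ℕ → Prop := Relation.ReflTransGen wBCov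

/-- the (0-indexed) positions `j₁-1 < … < j_λ-1` where the maximal value is attained. -/
def maxPos (x : List ℕ) : List ℕ :=
  (List.range x.length).filter fun i => x.getD i 0 = rk x

/-- `λ(x)`. -/
def lam (x : List ℕ) : ℕ := (maxPos x).length

/-- `𝕄(x) = (𝕄(x)_λ, …, 𝕄(x)₁)`. -/
def Mword (x : List ℕ) : List ℕ :=
  (List.zipWith (fun a b => b - a - 1) (maxPos x) ((maxPos x).drop 1) ++
    [x.length - (maxPos x).getLastD 0 - 1]).reverse

/-- the pieces `x|^{1..l₁}, x|^{l₁+1..l₂}, …, x|^{l_p+1..r}`. -/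
def pieces (x : List ℕ) (ls : List ℕ) : List (List ℕ) :=
  ((0 :: ls).zip (ls ++ [rk x])).map fun p => corestrict x (Finset.Icc (p.1 + 1) p.2)

/-- `x^{(l₁,…,l_p)}`. -/
def xfam (x : List ℕ) (ls : List ℕ) : List ℕ := catAll (pieces x ls)

variable (𝕂 : Type) [Field 𝕂]

/-- the vector space `𝕂[ST]` (with basis all words; only the basis elements in `ST` matter). -/
abbrev V := List ℕ →₀ 𝕂

/-- the coproduct `Δ`. -/
noncomputable def Delta : V 𝕂 →ₗ[𝕂] TensorProduct 𝕂 (V 𝕂) (V 𝕂) :=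
  Finsupp.lsum 𝕂 fun x => LinearMap.toSpanSingleton 𝕂 _
    (∑ i ∈ Finset.Ico 1 (rk x),
      Finsupp.single (corestrict x (Finset.Icc 1 i)) (1 : 𝕂) ⊗ₜ[𝕂]
        Finsupp.single (corestrict x (Finset.Icc (i + 1) (rk x))) (1 : 𝕂))

/-- the subspace `𝕂[ST_n]`. -/
noncomputable def STspanN (n : ℕ) : Submodule 𝕂 (V 𝕂) :=
  Submodule.span 𝕂 {v | ∃ l, IsST l ∧ l.length = n ∧ v = Finsupp.single l 1}

/-- `Prim(ST)_n = {v ∈ 𝕂[ST_n] : Δ v = 0}`. -/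
noncomputable def PrimN (n : ℕ) : Submodule 𝕂 (V 𝕂) :=
  STspanN 𝕂 n ⊓ LinearMap.ker (Delta 𝕂)

/-- the projection `E`. -/
noncomputable def Emap : V 𝕂 →ₗ[𝕂] V 𝕂 :=
  Finsupp.lsum 𝕂 fun x => LinearMap.toSpanSingleton 𝕂 _
    (∑ᶠ ls ∈ {ls : List ℕ | ls.Chain' (· < ·) ∧ ∀ l ∈ ls, 0 < l ∧ l < rk x},
      ((-1 : 𝕂) ^ ls.length) • Finsupp.single (xfam x ls) (1 : 𝕂))

/-- generic bilinear-on-basis operation indexed by a set of shuffles. -/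
noncomputable def shOp (P : ℕ → ℕ → List ℕ → Prop) (a b : V 𝕂) : V 𝕂 :=
  Finsupp.sum a fun x cx => Finsupp.sum b fun y cy =>
    (cx * cy) • ∑ᶠ f ∈ {f : List ℕ | IsShuffle [rk x, rk y] f ∧ P (rk x) (rk y) f},
      Finsupp.single (wcomp f (cat x y)) (1 : 𝕂)

/-- the dendriform operation `≻`. -/
noncomputable def succOp : V 𝕂 → V 𝕂 → V 𝕂 :=
  shOp 𝕂 fun r s f => ent f r < ent f (r + s)

/-- the dendriform operation `≺`. -/
noncomputable def precOp : V 𝕂 → V 𝕂 → V 𝕂 :=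
  shOp 𝕂 fun r s f => ent f (r + s) < ent f r

/-- `ω^≺(y₁,…,y_k) = y₁ ≺ (y₂ ≺ (… ≺ y_k))`. -/
noncomputable def omPrec : List (V 𝕂) → V 𝕂
  | [] => 0
  | [a] => a
  | a :: as => precOp 𝕂 a (omPrec as)

/-- `ω^≻(y₁,…,y_k) = ((y₁ ≻ y₂) ≻ …) ≻ y_k`. -/
noncomputable def omSucc : List (V 𝕂) → V 𝕂
  | [] => 0
  | a :: as => as.foldl (succOp 𝕂) a

/-- `ω^≺(l) ≻ x ≺ ω^≻(r)`, empty factors omitted. -/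
noncomputable def mterm (x : V 𝕂) : List (V 𝕂) → List (V 𝕂) → V 𝕂
  | [], [] => x
  | [], r => precOp 𝕂 x (omSucc 𝕂 r)
  | l, [] => succOp 𝕂 (omPrec 𝕂 l) x
  | l, r => precOp 𝕂 (succOp 𝕂 (omPrec 𝕂 l) x) (omSucc 𝕂 r)

/-- the brace operation `M^{ST}_{1k}(x; y₁,…,y_k)`. -/
noncomputable def braceM (x : V 𝕂) (ys : List (V 𝕂)) : V 𝕂 :=
  ∑ j ∈ Finset.range (ys.length + 1),
    ((-1 : 𝕂) ^ (ys.length - j)) • mterm 𝕂 x (ys.take j) (ys.drop j)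

/-- generic bilinear-on-basis operation indexed by a set of stuffles, with `q`-weights
    `q^{s(f) - c}` where `s(f) = |f| - rk f`. -/
noncomputable def stOp (q : 𝕂) (c : ℕ) (P : ℕ → ℕ → List ℕ → Prop) (a b : V 𝕂) : V 𝕂 :=
  Finsupp.sum a fun x cx => Finsupp.sum b fun y cy =>
    (cx * cy) • ∑ᶠ f ∈ {f : List ℕ | IsStuffle [rk x, rk y] f ∧ P (rk x) (rk y) f},
      q ^ (f.length - rk f - c) • Finsupp.single (wcomp f (cat x y)) (1 : 𝕂)

/-- `≻_q`. -/
noncomputable def succQ (q : 𝕂) : V 𝕂 → V 𝕂 → V 𝕂 :=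
  stOp 𝕂 q 0 fun r s f => ent f r < ent f (r + s)

/-- `≺_q`. -/
noncomputable def precQ (q : 𝕂) : V 𝕂 → V 𝕂 → V 𝕂 :=
  stOp 𝕂 q 0 fun r s f => ent f (r + s) < ent f r

/-- `·_q`. -/
noncomputable def dotQ (q : 𝕂) : V 𝕂 → V 𝕂 → V 𝕂 :=
  stOp 𝕂 q 1 fun r s f => ent f r = ent f (r + s)

/-- `≽_q = ≻_q + q ·_q`. -/
noncomputable def succcQ (q : 𝕂) (a b : V 𝕂) : V 𝕂 := succQ 𝕂 q a b + q • dotQ 𝕂 q a b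

/-- `ω^{≺_q}`. -/
noncomputable def omPrecQ (q : 𝕂) : List (V 𝕂) → V 𝕂
  | [] => 0
  | [a] => a
  | a :: as => precQ 𝕂 q a (omPrecQ q as)

/-- `ω^{≽_q}`. -/
noncomputable def omSucccQ (q : 𝕂) : List (V 𝕂) → V 𝕂
  | [] => 0
  | a :: as => as.foldl (succcQ 𝕂 q) a

/-- `ω^{≺_q}(l) ≽_q x ≺_q ω^{≽_q}(r)`, empty factors omitted. -/
noncomputable def mtermQ (q : 𝕂) (x : V 𝕂) : List (V 𝕂) → List (V 𝕂) → V 𝕂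
  | [], [] => x
  | [], r => precQ 𝕂 q x (omSucccQ 𝕂 q r)
  | l, [] => succcQ 𝕂 q (omPrecQ 𝕂 q l) x
  | l, r => precQ 𝕂 q (succcQ 𝕂 q (omPrecQ 𝕂 q l) x) (omSucccQ 𝕂 q r)

/-- the brace operation `M^{ST(q)}_{1k}`. -/
noncomputable def braceMQ (q : 𝕂) (x : V 𝕂) (ys : List (V 𝕂)) : V 𝕂 :=
  ∑ j ∈ Finset.range (ys.length + 1),
    ((-1 : 𝕂) ^ (ys.length - j)) • mtermQ 𝕂 q x (ys.take j) (ys.drop j)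

/-- the shuffle product of two basis elements. -/
noncomputable def shufSingle (x y : List ℕ) : V 𝕂 :=
  ∑ᶠ f ∈ {f : List ℕ | IsShuffle [rk x, rk y] f},
    Finsupp.single (wcomp f (cat x y)) (1 : 𝕂)

/-- the shuffle product `*` on `𝕂[ST]`, as a bilinear map. -/
noncomputable def shufL : V 𝕂 →ₗ[𝕂] V 𝕂 →ₗ[𝕂] V 𝕂 :=
  Finsupp.lsum 𝕂 fun x => LinearMap.toSpanSingleton 𝕂 _
    (Finsupp.lsum 𝕂 fun y => LinearMap.toSpanSingleton 𝕂 _ (shufSingle 𝕂 x y))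

/-- the augmented space `𝕂·1 ⊕ 𝕂[ST]`. -/
abbrev Vp := 𝕂 × V 𝕂

/-- inclusion `𝕂[ST] ↪ 𝕂·1 ⊕ 𝕂[ST]`. -/
noncomputable def inclV : V 𝕂 →ₗ[𝕂] Vp 𝕂 := LinearMap.inr 𝕂 𝕂 (V 𝕂)

/-- the unit `1`. -/
noncomputable def oneVp : Vp 𝕂 := (1, 0)

/-- the unital extension of the shuffle product to `𝕂·1 ⊕ 𝕂[ST]`, as a bilinear map:
    `(a + x)(b + y) = ab + (a y + b x + x * y)`.  In particular `1 * u = u = u * 1`. -/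
noncomputable def mulVp : Vp 𝕂 →ₗ[𝕂] Vp 𝕂 →ₗ[𝕂] Vp 𝕂 :=
  LinearMap.mk₂ 𝕂 (fun u v => (u.1 * v.1, u.1 • v.2 + v.1 • u.2 + shufL 𝕂 u.2 v.2))
    (fun u u' v => by
      refine Prod.ext ?_ ?_ <;>
        simp [add_mul, add_smul, smul_add, map_add, LinearMap.add_apply] <;> abel)
    (fun c u v => by
      refine Prod.ext ?_ ?_ <;>
        simp [mul_assoc, mul_smul, smul_add, smul_comm c v.1] <;> abel)
    (fun u v v' => by
      refine Prod.ext ?_ ?_ <;>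
        simp [mul_add, add_smul, smul_add, map_add, LinearMap.add_apply] <;> abel)
    (fun c u v => by
      refine Prod.ext ?_ ?_ <;>
        simp [mul_left_comm, mul_smul, smul_add, smul_comm c u.1] <;> abel)

/-- the extension `Δ⁺` of `Δ` to `𝕂·1 ⊕ 𝕂[ST]`, with `Δ⁺(1) = 1 ⊗ 1` and
    `Δ⁺(x) = x ⊗ 1 + 1 ⊗ x + Δ(x)` for `x ∈ 𝕂[ST]`. -/
noncomputable def DeltaP : Vp 𝕂 →ₗ[𝕂] TensorProduct 𝕂 (Vp 𝕂) (Vp 𝕂) :=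
  (LinearMap.toSpanSingleton 𝕂 _ (oneVp 𝕂 ⊗ₜ[𝕂] oneVp 𝕂)).comp (LinearMap.fst 𝕂 𝕂 (V 𝕂))
    + (((TensorProduct.mk 𝕂 (Vp 𝕂) (Vp 𝕂)).flip (oneVp 𝕂)).comp (inclV 𝕂)).comp
        (LinearMap.snd 𝕂 𝕂 (V 𝕂))
    + ((TensorProduct.mk 𝕂 (Vp 𝕂) (Vp 𝕂) (oneVp 𝕂)).comp (inclV 𝕂)).comp
        (LinearMap.snd 𝕂 𝕂 (V 𝕂))
    + ((TensorProduct.map (inclV 𝕂) (inclV 𝕂)).comp (Delta 𝕂)).comp (LinearMap.snd 𝕂 𝕂 (V 𝕂))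

/-- componentwise product on the tensor square: `(a⊗b)·(c⊗d) = (a·c)⊗(b·d)`. -/
noncomputable def mulTsq :
    TensorProduct 𝕂 (Vp 𝕂) (Vp 𝕂) →ₗ[𝕂]
      TensorProduct 𝕂 (Vp 𝕂) (Vp 𝕂) →ₗ[𝕂] TensorProduct 𝕂 (Vp 𝕂) (Vp 𝕂) :=
  TensorProduct.lift
    (((TensorProduct.mapBilinear (RingHom.id 𝕂) (Vp 𝕂) (Vp 𝕂) (Vp 𝕂) (Vp 𝕂)).comp (mulVp 𝕂)).compl₂
      (mulVp 𝕂))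

/-- concatenation on the right with a fixed word, linearized: `x ↦ x × y`. -/
noncomputable def catR (y : List ℕ) : V 𝕂 →ₗ[𝕂] V 𝕂 :=
  Finsupp.lsum 𝕂 fun x => LinearMap.toSpanSingleton 𝕂 _ (Finsupp.single (cat x y) (1 : 𝕂))

/-- concatenation on the left with a fixed word, linearized: `y ↦ x × y`. -/
noncomputable def catL (x : List ℕ) : V 𝕂 →ₗ[𝕂] V 𝕂 :=
  Finsupp.lsum 𝕂 fun y => LinearMap.toSpanSingleton 𝕂 _ (Finsupp.single (cat x y) (1 : 𝕂))

/-- `Sh^•(r₁,…,r_p)`: surjections onto `{1,…,R-p+1}` (where `R = r₁+…+r_p`), strictly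
    increasing on each block, attaining the maximal value exactly at the block ends, and whose
    corestriction to `{1,…,R-p}` is a `(r₁-1,…,r_p-1)`-shuffle. -/
def ShBull (rs : List ℕ) (f : List ℕ) : Prop :=
  memST f rs.sum (rs.sum - rs.length + 1) ∧ blockIncr rs f ∧
    (∀ i, 1 ≤ i → i ≤ rs.sum →
      (ent f i = rs.sum - rs.length + 1 ↔ ∃ k, k < rs.length ∧ i = (rs.take (k + 1)).sum)) ∧
    IsShuffle (rs.map (· - 1)) (corestrict f (Finset.Icc 1 (rs.sum - rs.length)))

/-! ### auxiliary lemmas -/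

lemma rk_cons (a : ℕ) (l : List ℕ) : rk (a :: l) = max a (rk l) := rfl

lemma foldr_max_eq (l : List ℕ) (c : ℕ) : l.foldr max c = max (rk l) c := by
  induction l with
  | nil => simp [rk]
  | cons a l ih => simp only [rk_cons, List.foldr_cons, ih]; omega

lemma rk_append (l1 l2 : List ℕ) : rk (l1 ++ l2) = max (rk l1) (rk l2) := by
  show (l1 ++ l2).foldr max 0 = _
  rw [List.foldr_append, show l2.foldr max 0 = rk l2 from rfl, foldr_max_eq]

lemma le_rk_of_mem {a : ℕ} {l : List ℕ} (h : a ∈ l) : a ≤ rk l := by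
  induction l with
  | nil => simp at h
  | cons b l ih =>
    rcases List.mem_cons.1 h with h | h
    · simp [rk_cons, h]
    · have := ih h; simp only [rk_cons]; omega

lemma rk_le_of {l : List ℕ} {m : ℕ} (h1 : ∀ a ∈ l, a ≤ m) : rk l ≤ m := by
  induction l with
  | nil => simp [rk]
  | cons b l ih =>
    have := h1 b (by simp)
    have := ih (fun a ha => h1 a (by simp [ha]))
    simp only [rk_cons]; omega

lemma rk_eq_of {l : List ℕ} {m : ℕ} (h1 : ∀ a ∈ l, a ≤ m) (h2 : m ∈ l) : rk l = m :=
  le_antisymm (rk_le_of h1) (le_rk_of_mem h2)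

lemma getD_le_rk (l : List ℕ) (i : ℕ) : l.getD i 0 ≤ rk l := by
  by_cases h : i < l.length
  · rw [List.getD_eq_getElem l 0 h]; exact le_rk_of_mem (List.getElem_mem h)
  · rw [List.getD_eq_default l 0 (by omega)]; exact Nat.zero_le _

lemma IsST.one_le_rk {l : List ℕ} (h : IsST l) : 1 ≤ rk l := by
  obtain ⟨a, ha⟩ := List.exists_mem_of_ne_nil l h.1
  have := (h.2 a).1 ha
  omega

lemma IsST.rk_mem {l : List ℕ} (h : IsST l) : rk l ∈ l :=
  (h.2 (rk l)).2 ⟨h.one_le_rk, le_refl _⟩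

lemma IsST.entry {l : List ℕ} (h : IsST l) {i : ℕ} (hi : i < l.length) :
    1 ≤ l.getD i 0 ∧ l.getD i 0 ≤ rk l := by
  rw [List.getD_eq_getElem l 0 hi]
  exact ⟨((h.2 _).1 (List.getElem_mem hi)).1, le_rk_of_mem (List.getElem_mem hi)⟩

lemma IsST.mem_of {l : List ℕ} (h : IsST l) {k : ℕ} (h1 : 1 ≤ k) (h2 : k ≤ rk l) : k ∈ l :=
  (h.2 k).2 ⟨h1, h2⟩

lemma IsST.exists_getD {l : List ℕ} (h : IsST l) {k : ℕ} (h1 : 1 ≤ k) (h2 : k ≤ rk l) :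
    ∃ t, t < l.length ∧ l.getD t 0 = k := by
  obtain ⟨t, ht, he⟩ := List.mem_iff_getElem.1 (h.mem_of h1 h2)
  exact ⟨t, ht, by rw [List.getD_eq_getElem l 0 ht, he]⟩

lemma getD_drop' (l : List ℕ) (m t : ℕ) : (l.drop m).getD t 0 = l.getD (m + t) 0 := by
  by_cases h : t < (l.drop m).length
  · rw [List.getD_eq_getElem _ 0 h, List.getElem_drop,
      List.getD_eq_getElem _ 0 (by simp at h ⊢; omega)]
  · rw [List.getD_eq_default _ 0 (by omega), List.getD_eq_default _ 0 (by simp at h ⊢; omega)]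

lemma mem_of_getD {l : List ℕ} {i a : ℕ} (h : i < l.length) (he : l.getD i 0 = a) : a ∈ l := by
  rw [List.getD_eq_getElem _ 0 h] at he
  exact he ▸ List.getElem_mem h
/-! ### dotW lemmas -/

lemma dotW_length (x y : List ℕ) : (dotW x y).length = x.length + y.length := by
  simp [dotW]

lemma rk_dotW {x y : List ℕ} (hx : IsST x) (hy : IsST y) :
    rk (dotW x y) = rk x + rk y - 1 := by
  have hrx := hx.one_le_rk; have hry := hy.one_le_rk
  apply rk_eq_of
  · intro a ha
    simp only [dotW, List.mem_append, List.mem_map] at ha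
    rcases ha with ⟨v, hv, rfl⟩ | ⟨v, hv, rfl⟩
    · have := (hx.2 v).1 hv
      split <;> omega
    · have := (hy.2 v).1 hv
      split <;> omega
  · simp only [dotW, List.mem_append, List.mem_map]
    exact Or.inl ⟨rk x, hx.rk_mem, by simp⟩

lemma isST_dotW {x y : List ℕ} (hx : IsST x) (hy : IsST y) : IsST (dotW x y) := by
  have hrx := hx.one_le_rk; have hry := hy.one_le_rk
  constructor
  · simp only [dotW, ne_eq, List.append_eq_nil_iff, List.map_eq_nil_iff, not_and]
    intro h; exact absurd h hx.1
  · intro k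
    rw [rk_dotW hx hy]
    simp only [dotW, List.mem_append, List.mem_map]
    constructor
    · rintro (⟨v, hv, rfl⟩ | ⟨v, hv, rfl⟩)
      · have := (hx.2 v).1 hv; split <;> omega
      · have := (hy.2 v).1 hv; split <;> omega
    · rintro ⟨h1, h2⟩
      by_cases hk : k < rk x
      · exact Or.inl ⟨k, hx.mem_of h1 (by omega), by simp [hk]⟩
      · by_cases hk2 : k = rk x + rk y - 1
        · exact Or.inl ⟨rk x, hx.rk_mem, by simp [hk2]⟩
        · refine Or.inr ⟨k - rk x + 1, hy.mem_of (by omega) (by omega), ?_⟩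
          have : k - rk x + 1 < rk y := by omega
          simp only [this, if_true]; omega

lemma dotW_getD_left {x : List ℕ} (y : List ℕ) {i : ℕ} (hi : i < x.length) :
    (dotW x y).getD i 0 =
      if x.getD i 0 < rk x then x.getD i 0 else rk x + rk y - 1 := by
  rw [dotW, List.getD_append _ _ _ _ (by simpa using hi),
    List.getD_eq_getElem _ 0 (by simpa using hi), List.getElem_map,
    List.getD_eq_getElem _ 0 hi]

lemma dotW_getD_right (x : List ℕ) {y : List ℕ} {t : ℕ} (ht : t < y.length) :
    (dotW x y).getD (x.length + t) 0 =
      if y.getD t 0 < rk y then y.getD t 0 + rk x - 1 else rk x + rk y - 1 := by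
  rw [dotW, List.getD_append_right _ _ _ _ (by simp)]
  simp only [List.length_map]
  rw [show x.length + t - x.length = t by omega,
    List.getD_eq_getElem _ 0 (by simpa using ht), List.getElem_map,
    List.getD_eq_getElem _ 0 ht]
/-! ### associativity -/

lemma dotW_assoc {x y z : List ℕ} (hx : IsST x) (hy : IsST y) (hz : IsST z) :
    dotW (dotW x y) z = dotW x (dotW y z) := by
  have hrx := hx.one_le_rk; have hry := hy.one_le_rk; have hrz := hz.one_le_rk
  have h1 : rk (dotW x y) = rk x + rk y - 1 := rk_dotW hx hy
  have h2 : rk (dotW y z) = rk y + rk z - 1 := rk_dotW hy hz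
  have L : dotW (dotW x y) z =
      (dotW x y).map (fun v => if v < rk (dotW x y) then v else rk (dotW x y) + rk z - 1) ++
      z.map (fun v => if v < rk z then v + rk (dotW x y) - 1
        else rk (dotW x y) + rk z - 1) := rfl
  have R : dotW x (dotW y z) =
      x.map (fun v => if v < rk x then v else rk x + rk (dotW y z) - 1) ++
      (dotW y z).map (fun v => if v < rk (dotW y z) then v + rk x - 1
        else rk x + rk (dotW y z) - 1) := rfl
  rw [L, R, h1, h2, dotW, dotW, List.map_append, List.map_append, List.map_map, List.map_map,
    List.map_map, List.map_map, List.append_assoc]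
  congr 1
  · apply List.map_congr_left
    intro v hv; have hb := (hx.2 v).1 hv
    simp only [Function.comp_apply]
    split_ifs <;> omega
  congr 1
  · apply List.map_congr_left
    intro v hv; have hb := (hy.2 v).1 hv
    simp only [Function.comp_apply]
    split_ifs <;> omega
  · apply List.map_congr_left
    intro v hv; have hb := (hz.2 v).1 hv
    simp only [Function.comp_apply]
    split_ifs <;> omega
/-! ### dotAll lemmas -/

lemma isST_foldl {as : List (List ℕ)} {a : List ℕ} (ha : IsST a)
    (has : ∀ x ∈ as, IsST x) : IsST (as.foldl dotW a) := by
  induction as generalizing a with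
  | nil => exact ha
  | cons b bs ih =>
    exact ih (isST_dotW ha (has b (by simp))) (fun x hx => has x (by simp [hx]))

lemma isST_dotAll {l : List (List ℕ)} (hne : l ≠ []) (h : ∀ x ∈ l, IsST x) :
    IsST (dotAll l) := by
  cases l with
  | nil => exact absurd rfl hne
  | cons a as => exact isST_foldl (h a (by simp)) (fun x hx => h x (by simp [hx]))

lemma len_foldl (as : List (List ℕ)) (a : List ℕ) :
    (as.foldl dotW a).length = a.length + (as.map List.length).sum := by
  induction as generalizing a with
  | nil => simp
  | cons b bs ih => simp [ih, dotW_length]; omega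

lemma len_dotAll {l : List (List ℕ)} (hne : l ≠ []) :
    (dotAll l).length = (l.map List.length).sum := by
  cases l with
  | nil => exact absurd rfl hne
  | cons a as => simp [dotAll, len_foldl]

lemma dotAll_cons {a : List ℕ} {as : List (List ℕ)} (hne : as ≠ [])
    (ha : IsST a) (has : ∀ x ∈ as, IsST x) :
    dotAll (a :: as) = dotW a (dotAll as) := by
  induction as generalizing a with
  | nil => exact absurd rfl hne
  | cons b bs ih =>
    have hb := has b (by simp)
    have hbs : ∀ x ∈ bs, IsST x := fun x hx => has x (by simp [hx])
    cases bs with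
    | nil => rfl
    | cons c cs =>
      have h1 : dotAll (a :: b :: c :: cs) = dotAll (dotW a b :: c :: cs) := rfl
      rw [h1, ih (by simp) (isST_dotW ha hb),
        ih (by simp) hb, ← dotW_assoc ha hb (isST_dotAll (by simp) hbs)]
      exact hbs
      exact hbs

lemma dotAll_append {u v : List (List ℕ)} (hu : u ≠ []) (hv : v ≠ [])
    (hus : ∀ x ∈ u, IsST x) (hvs : ∀ x ∈ v, IsST x) :
    dotAll (u ++ v) = dotW (dotAll u) (dotAll v) := by
  induction u with
  | nil => exact absurd rfl hu
  | cons a as ih =>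
    have ha := hus a (by simp)
    have has : ∀ x ∈ as, IsST x := fun x hx => hus x (by simp [hx])
    cases as with
    | nil => exact dotAll_cons hv ha hvs
    | cons b bs =>
      rw [List.cons_append, dotAll_cons (by simp) ha
          (fun x hx => by
            simp only [List.cons_append, List.mem_cons, List.mem_append] at hx
            rcases hx with h | h | h
            exacts [has x (by simp [h]), has x (by simp [h]), hvs x h]),
        ih (by simp) has, dotAll_cons (by simp) ha has,
        dotW_assoc ha (isST_dotAll (by simp) has) (isST_dotAll hv hvs)]
/-! ### cat / catAll lemmas -/

lemma cat_length (x y : List ℕ) : (cat x y).length = x.length + y.length := by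
  simp [cat]

lemma catAll_length (xs : List (List ℕ)) :
    (catAll xs).length = (xs.map List.length).sum := by
  induction xs with
  | nil => rfl
  | cons a as ih => simp [catAll, cat_length] at *; omega

lemma take_map_sum_succ (xs : List (List ℕ)) (f : List ℕ → ℕ) {k : ℕ} (hk : k < xs.length) :
    ((xs.take (k+1)).map f).sum = ((xs.take k).map f).sum + f (xs.getD k []) := by
  rw [List.map_take, List.map_take, List.sum_take_succ _ k (by simpa using hk),
    List.getElem_map, List.getD_eq_getElem _ _ hk]

lemma take_map_sum_le (xs : List (List ℕ)) (f : List ℕ → ℕ) (k : ℕ) :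
    ((xs.take k).map f).sum ≤ (xs.map f).sum := by
  rw [List.map_take]
  conv_rhs => rw [← List.take_append_drop k (xs.map f)]
  rw [List.sum_append]
  omega

lemma sum_take_succ' (rs : List ℕ) {k : ℕ} (hk : k < rs.length) :
    (rs.take (k+1)).sum = (rs.take k).sum + rs.getD k 0 := by
  rw [List.sum_take_succ _ k hk, List.getD_eq_getElem _ _ hk]

lemma sum_take_mono (rs : List ℕ) {k k' : ℕ} (h : k ≤ k') :
    (rs.take k).sum ≤ (rs.take k').sum := by
  rw [show k' = k + (k' - k) by omega, List.take_add]
  simp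

lemma sum_take_lt (rs : List ℕ) (hpos : ∀ r ∈ rs, 1 ≤ r) {k k' : ℕ}
    (h : k < k') (hk : k < rs.length) :
    (rs.take k).sum < (rs.take k').sum := by
  have h1 := sum_take_succ' rs hk
  have h2 : 1 ≤ rs.getD k 0 := by
    rw [List.getD_eq_getElem _ _ hk]; exact hpos _ (List.getElem_mem hk)
  have h3 := sum_take_mono rs (show k + 1 ≤ k' by omega)
  omega

lemma catAll_getD {xs : List (List ℕ)} (hxs : ∀ x ∈ xs, x ≠ []) {k t : ℕ}
    (hk : k < xs.length) (ht : t < (xs.getD k []).length) :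
    (catAll xs).getD (((xs.take k).map List.length).sum + t) 0
      = (xs.getD k []).getD t 0 + ((xs.take k).map rk).sum := by
  induction xs generalizing k with
  | nil => simp at hk
  | cons a as ih =>
    have hca : catAll (a :: as) = a ++ (catAll as).map (· + rk a) := rfl
    cases k with
    | zero =>
      simp only [List.getD_cons_zero] at ht ⊢
      simp only [List.take_zero, List.map_nil, List.sum_nil, Nat.zero_add, Nat.add_zero, hca]
      rw [List.getD_append _ _ _ _ ht]
    | succ k =>
      simp only [List.getD_cons_succ] at ht ⊢
      have hk' : k < as.length := by simpa using hk
      have hlt : ((as.take k).map List.length).sum + t < (catAll as).length := by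
        rw [catAll_length]
        have := take_map_sum_succ as List.length hk'
        have := take_map_sum_le as List.length (k+1)
        omega
      simp only [List.take_succ_cons, List.map_cons, List.sum_cons, hca]
      rw [Nat.add_assoc, List.getD_append_right _ _ _ _ (by omega),
        show a.length + (((as.take k).map List.length).sum + t) - a.length
          = ((as.take k).map List.length).sum + t by omega]
      rw [List.getD_eq_getElem _ 0 (by simpa using hlt), List.getElem_map,
        ← List.getD_eq_getElem _ 0 hlt, ih (fun x hx => hxs x (by simp [hx])) hk' ht]
      omega

lemma wcomp_length (f w : List ℕ) : (wcomp f w).length = w.length := by simp [wcomp]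

lemma wcomp_getD {f w : List ℕ} {i : ℕ} (hi : i < w.length) :
    (wcomp f w).getD i 0 = ent f (w.getD i 0) := by
  rw [wcomp, List.getD_eq_getElem _ 0 (by simpa using hi), List.getElem_map,
    List.getD_eq_getElem _ 0 hi]
/-! ### the decomposition lemma -/

lemma decomp_of_split {x : List ℕ} (hx : IsST x) {m c : ℕ}
    (hm1 : 1 ≤ m) (hm2 : m < x.length) (hc1 : 1 ≤ c) (hc2 : c ≤ rk x)
    (D3 : ∀ w, 1 ≤ w → w < c → ∀ t, t < x.length → x.getD t 0 = w → t < m)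
    (D4 : ∀ w, c ≤ w → w < rk x → ∀ t, t < x.length → x.getD t 0 = w → m ≤ t)
    (D5 : ∃ t, t < m ∧ x.getD t 0 = rk x)
    (D6 : ∃ t, m ≤ t ∧ t < x.length ∧ x.getD t 0 = rk x) :
    ∃ u v, IsST u ∧ IsST v ∧ x = dotW u v := by
  set r := rk x with hr
  set u : List ℕ := (x.take m).map (fun w => min w c) with hu
  set v : List ℕ := (x.drop m).map (fun w => w - (c-1)) with hv
  have hul : u.length = m := by simp [hu]; omega
  have hvl : v.length = x.length - m := by simp [hv]
  -- membership characterizations of prefix/suffix entries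
  have hpre : ∀ w ∈ x.take m, (w < c ∨ w = r) ∧ 1 ≤ w := by
    intro w hw
    obtain ⟨t, ht, he⟩ := List.mem_iff_getElem.1 hw
    have htm : t < m := by simp at ht; omega
    have htx : t < x.length := by omega
    rw [List.getElem_take] at he
    have hb := hx.entry htx
    rw [List.getD_eq_getElem _ 0 htx, he] at hb
    refine ⟨?_, hb.1⟩
    by_contra hcon
    push_neg at hcon
    have := D4 w (by omega) (by omega) t htx (by rw [List.getD_eq_getElem _ 0 htx, he])
    omega
  have hsuf : ∀ w ∈ x.drop m, c ≤ w ∧ w ≤ r := by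
    intro w hw
    obtain ⟨t, ht, he⟩ := List.mem_iff_getElem.1 hw
    have htx : m + t < x.length := by simp at ht; omega
    rw [List.getElem_drop] at he
    have hb := hx.entry htx
    rw [List.getD_eq_getElem _ 0 htx, he] at hb
    refine ⟨?_, hb.2⟩
    by_contra hcon
    push_neg at hcon
    have := D3 w hb.1 (by omega) (m+t) htx (by rw [List.getD_eq_getElem _ 0 htx, he])
    omega
  -- rk u = c
  have hcu : c ∈ u := by
    obtain ⟨t, ht, he⟩ := D5
    have htx : t < x.length := by omega
    rw [List.getD_eq_getElem _ 0 htx] at he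
    refine List.mem_map.2 ⟨r, ?_, by omega⟩
    exact List.mem_iff_getElem.2 ⟨t, by simp; omega, by rw [List.getElem_take]; exact he⟩
  have hru : rk u = c := by
    apply rk_eq_of _ hcu
    intro a ha
    obtain ⟨w, _, rfl⟩ := List.mem_map.1 ha
    omega
  -- rk v = r - c + 1
  have hrv : rk v = r - c + 1 := by
    apply rk_eq_of
    · intro a ha
      obtain ⟨w, hw, rfl⟩ := List.mem_map.1 ha
      have := (hsuf w hw).2
      omega
    · obtain ⟨t, ht1, ht2, he⟩ := D6
      refine List.mem_map.2 ⟨r, ?_, by omega⟩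
      refine mem_of_getD (i := t - m) (by simp; omega) ?_
      rw [getD_drop', show m + (t - m) = t by omega]
      exact he
  -- IsST u
  have hSTu : IsST u := by
    constructor
    · intro h; rw [h] at hul; simp at hul; omega
    · intro k
      rw [hru]
      constructor
      · intro hk
        obtain ⟨w, hw, rfl⟩ := List.mem_map.1 hk
        have := (hpre w hw).2
        constructor <;> omega
      · rintro ⟨h1, h2⟩
        rcases Nat.lt_or_ge k c with hk | hk
        · obtain ⟨t, ht, he⟩ := hx.exists_getD h1 (by omega)
          have htm : t < m := D3 k h1 hk t ht he
          rw [List.getD_eq_getElem _ 0 ht] at he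
          refine List.mem_map.2 ⟨k, ?_, by omega⟩
          exact List.mem_iff_getElem.2 ⟨t, by simp; omega, by rw [List.getElem_take]; exact he⟩
        · have : k = c := by omega
          rw [this]; exact hcu
  -- IsST v
  have hSTv : IsST v := by
    constructor
    · intro h; rw [h] at hvl; simp at hvl; omega
    · intro k
      rw [hrv]
      constructor
      · intro hk
        obtain ⟨w, hw, rfl⟩ := List.mem_map.1 hk
        have := hsuf w hw
        constructor <;> omega
      · rintro ⟨h1, h2⟩
        rcases Nat.lt_or_ge k (r - c + 1) with hk | hk
        · obtain ⟨t, ht, he⟩ := hx.exists_getD (show 1 ≤ k + c - 1 by omega)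
            (show k + c - 1 ≤ r by omega)
          have htm : m ≤ t := D4 (k + c - 1) (by omega) (by omega) t ht he
          refine List.mem_map.2 ⟨k + c - 1, ?_, by omega⟩
          refine mem_of_getD (i := t - m) (by simp; omega) ?_
          rw [getD_drop', show m + (t - m) = t by omega]
          exact he
        · obtain ⟨t, ht1, ht2, he⟩ := D6
          refine List.mem_map.2 ⟨r, ?_, by omega⟩
          refine mem_of_getD (i := t - m) (by simp; omega) ?_
          rw [getD_drop', show m + (t - m) = t by omega]
          exact he
  refine ⟨u, v, hSTu, hSTv, ?_⟩
  have hx2 : x = x.take m ++ x.drop m := (List.take_append_drop m x).symm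
  rw [dotW, hru, hrv, hu, hv, List.map_map, List.map_map]
  conv_lhs => rw [hx2]
  congr 1
  · symm
    conv_rhs => rw [show x.take m = (x.take m).map id from (List.map_id _).symm]
    apply List.map_congr_left
    intro w hw
    have h1 := hpre w hw
    simp only [Function.comp_apply, id_eq]
    rcases h1.1 with h | h
    · rw [min_eq_left (by omega)]
      simp only [if_pos h]
    · rw [min_eq_right (by omega)]
      rw [if_neg (by omega)]
      omega
  · symm
    conv_rhs => rw [show x.drop m = (x.drop m).map id from (List.map_id _).symm]
    apply List.map_congr_left
    intro w hw
    have h1 := hsuf w hw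
    simp only [Function.comp_apply, id_eq]
    by_cases h : w = r
    · rw [if_neg (by omega)]
      omega
    · rw [if_pos (by omega)]
      omega
/-! ### cut structure of an iterated dot product -/

lemma dot_cut {ys : List (List ℕ)} (hST : ∀ x ∈ ys, IsST x) {j : ℕ}
    (hj1 : 1 ≤ j) (hj2 : j < ys.length) :
    ∃ a, 1 ≤ a ∧ a ≤ rk (dotAll ys) ∧
      (∀ i, i < ((ys.map List.length).take j).sum →
        (dotAll ys).getD i 0 < a ∨ (dotAll ys).getD i 0 = rk (dotAll ys)) ∧
      (∀ i, ((ys.map List.length).take j).sum ≤ i → i < (dotAll ys).length →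
        a ≤ (dotAll ys).getD i 0) := by
  have htne : ys.take j ≠ [] := by
    apply List.ne_nil_of_length_pos
    simp; omega
  have hdne : ys.drop j ≠ [] := by
    apply List.ne_nil_of_length_pos
    simp; omega
  have hA : IsST (dotAll (ys.take j)) :=
    isST_dotAll htne (fun x hx => hST x (List.mem_of_mem_take hx))
  have hC : IsST (dotAll (ys.drop j)) :=
    isST_dotAll hdne (fun x hx => hST x (List.mem_of_mem_drop hx))
  have hsplit : dotAll ys = dotW (dotAll (ys.take j)) (dotAll (ys.drop j)) := by
    conv_lhs => rw [← List.take_append_drop j ys]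
    exact dotAll_append htne hdne (fun x hx => hST x (List.mem_of_mem_take hx))
      (fun x hx => hST x (List.mem_of_mem_drop hx))
  have hAlen : (dotAll (ys.take j)).length = ((ys.map List.length).take j).sum := by
    rw [len_dotAll htne, List.map_take]
  have hrk : rk (dotAll ys) = rk (dotAll (ys.take j)) + rk (dotAll (ys.drop j)) - 1 := by
    rw [hsplit, rk_dotW hA hC]
  have h1A := hA.one_le_rk
  have h1C := hC.one_le_rk
  refine ⟨rk (dotAll (ys.take j)), h1A, by omega, ?_, ?_⟩
  · intro i hi
    have hval : (dotAll ys).getD i 0 =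
        if (dotAll (ys.take j)).getD i 0 < rk (dotAll (ys.take j))
        then (dotAll (ys.take j)).getD i 0
        else rk (dotAll (ys.take j)) + rk (dotAll (ys.drop j)) - 1 := by
      conv_lhs => rw [hsplit]
      exact dotW_getD_left _ (by omega)
    by_cases h : (dotAll (ys.take j)).getD i 0 < rk (dotAll (ys.take j))
    · left; rw [hval, if_pos h]; exact h
    · right; rw [hval, if_neg h]; omega
  · intro i hi1 hi2
    have hi2' : i < (dotAll (ys.take j)).length + (dotAll (ys.drop j)).length := by
      rw [hsplit, dotW_length] at hi2; exact hi2
    have ht2 : i - (dotAll (ys.take j)).length < (dotAll (ys.drop j)).length := by omega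
    have hieq : i = (dotAll (ys.take j)).length + (i - (dotAll (ys.take j)).length) := by omega
    have hval : (dotAll ys).getD i 0 =
        if (dotAll (ys.drop j)).getD (i - (dotAll (ys.take j)).length) 0 < rk (dotAll (ys.drop j))
        then (dotAll (ys.drop j)).getD (i - (dotAll (ys.take j)).length) 0
          + rk (dotAll (ys.take j)) - 1
        else rk (dotAll (ys.take j)) + rk (dotAll (ys.drop j)) - 1 := by
      conv_lhs => rw [hsplit, hieq]
      exact dotW_getD_right _ ht2
    have hCe := hC.entry ht2
    rw [hval]
    split_ifs <;> omega

lemma dot_max_in_range {ys : List (List ℕ)} (hST : ∀ x ∈ ys, IsST x) {j : ℕ}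
    (hj : j < ys.length) :
    ∃ i, ((ys.map List.length).take j).sum ≤ i ∧
      i < ((ys.map List.length).take (j+1)).sum ∧
      (dotAll ys).getD i 0 = rk (dotAll ys) := by
  set y := ys.getD j [] with hy
  have hyST : IsST y := hST y (by rw [hy, List.getD_eq_getElem _ _ hj]; exact List.getElem_mem hj)
  obtain ⟨t, ht, hte⟩ := hyST.exists_getD hyST.one_le_rk le_rfl
  have hsum : ((ys.map List.length).take (j+1)).sum
      = ((ys.map List.length).take j).sum + y.length := by
    rw [List.sum_take_succ _ j (by simpa using hj), List.getElem_map,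
      hy, List.getD_eq_getElem _ _ hj]
  set nj := ((ys.map List.length).take j).sum with hnj
  refine ⟨nj + t, by omega, by omega, ?_⟩
  -- B := dotAll (ys.take (j+1)) has its max at position nj + t
  have htake : ys.take (j+1) = ys.take j ++ [y] := by
    rw [hy, List.getD_eq_getElem _ _ hj, ← List.take_concat_get' ys j hj]
  have hBne : ys.take (j+1) ≠ [] := by
    apply List.ne_nil_of_length_pos; simp; omega
  have hBST : IsST (dotAll (ys.take (j+1))) :=
    isST_dotAll hBne (fun x hx => hST x (List.mem_of_mem_take hx))
  have hBlen : (dotAll (ys.take (j+1))).length = nj + y.length := by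
    rw [len_dotAll hBne, List.map_take, hsum]
  have hB : (dotAll (ys.take (j+1))).getD (nj + t) 0 = rk (dotAll (ys.take (j+1))) := by
    rcases Nat.eq_zero_or_pos j with rfl | hj0
    · have h0 : dotAll (ys.take 1) = y := by rw [htake]; rfl
      have h1 : nj = 0 := by rw [hnj]; simp
      rw [h0, h1, Nat.zero_add]
      exact hte
    · have htne : ys.take j ≠ [] := by apply List.ne_nil_of_length_pos; simp; omega
      have hAST : IsST (dotAll (ys.take j)) :=
        isST_dotAll htne (fun x hx => hST x (List.mem_of_mem_take hx))
      have hsp : dotAll (ys.take (j+1)) = dotW (dotAll (ys.take j)) y := by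
        rw [htake]
        have h2 := dotAll_append (u := ys.take j) (v := [y]) htne (by simp)
          (fun x hx => hST x (List.mem_of_mem_take hx)) (fun x hx => by
            simp at hx; rw [hx]; exact hyST)
        rw [h2]; rfl
      have hAlen : (dotAll (ys.take j)).length = nj := by
        rw [len_dotAll htne, List.map_take]
      rw [hsp, rk_dotW hAST hyST, ← hAlen, dotW_getD_right _ ht, hte]
      simp
  -- now push to z
  rcases Nat.lt_or_ge (j+1) ys.length with hlt | hge
  · have hdne : ys.drop (j+1) ≠ [] := by apply List.ne_nil_of_length_pos; simp; omega
    have hCST : IsST (dotAll (ys.drop (j+1))) :=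
      isST_dotAll hdne (fun x hx => hST x (List.mem_of_mem_drop hx))
    have hsp : dotAll ys = dotW (dotAll (ys.take (j+1))) (dotAll (ys.drop (j+1))) := by
      conv_lhs => rw [← List.take_append_drop (j+1) ys]
      exact dotAll_append hBne hdne (fun x hx => hST x (List.mem_of_mem_take hx))
        (fun x hx => hST x (List.mem_of_mem_drop hx))
    rw [hsp, dotW_getD_left _ (by omega), if_neg (by rw [hB]; omega),
      rk_dotW hBST hCST]
  · have : ys.take (j+1) = ys := List.take_of_length_le hge
    rw [← this]
    exact hB
/-! ### prefix-sum abbreviations -/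

def NS (xs : List (List ℕ)) (k : ℕ) : ℕ := ((xs.take k).map List.length).sum

lemma NS_eq (xs : List (List ℕ)) (k : ℕ) : NS xs k = ((xs.map List.length).take k).sum := by
  rw [NS, List.map_take]

lemma NS_succ {xs : List (List ℕ)} {k : ℕ} (hk : k < xs.length) :
    NS xs (k+1) = NS xs k + (xs.getD k []).length :=
  take_map_sum_succ xs List.length hk

lemma NS_mono (xs : List (List ℕ)) {k k' : ℕ} (h : k ≤ k') : NS xs k ≤ NS xs k' := by
  rw [NS_eq, NS_eq]; exact sum_take_mono _ h

lemma NS_top (xs : List (List ℕ)) : NS xs xs.length = (xs.map List.length).sum := by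
  rw [NS_eq, List.take_of_length_le (by simp)]

def SS (rs : List ℕ) (k : ℕ) : ℕ := (rs.take k).sum

/-- if the `xⁱ ∈ ST_{n_i}^{r_i}` are indecomposable, `f ∈ Sh^•(r₁,…,r_p)` and
`f∘(x¹×…×xᵖ) = y¹·y²·…·y^q` for surjections `yʲ`, then `q ≤ p`. -/
theorem statement_19 (rs : List ℕ) (hne : rs ≠ []) (hpos : ∀ r ∈ rs, 1 ≤ r)
    (xs : List (List ℕ)) (hlen : xs.length = rs.length)
    (hx : ∀ i, i < rs.length →
      Indec (xs.getD i []) ∧ rk (xs.getD i []) = rs.getD i 0)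
    (f : List ℕ) (hf : ShBull rs f)
    (ys : List (List ℕ)) (hys : ys ≠ []) (hysST : ∀ z ∈ ys, IsST z)
    (heq : wcomp f (catAll xs) = dotAll ys) :
    ys.length ≤ xs.length := by
  by_contra hcontra
  push_neg at hcontra
  obtain ⟨⟨hfST, hflen, hfrk⟩, hfbi, hfmax, -⟩ := hf
  set p := rs.length with hp
  set q := ys.length with hq
  have hp1 : 1 ≤ p := List.length_pos_iff.2 hne
  have hqp : p < q := by omega
  set z := wcomp f (catAll xs) with hzdef
  set M := rs.sum - p + 1 with hM
  -- basic facts about the xs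
  have hxST : ∀ k, k < p → IsST (xs.getD k []) := fun k hk => ((hx k hk).1).1
  have hxrk : ∀ k, k < p → rk (xs.getD k []) = rs.getD k 0 := fun k hk => (hx k hk).2
  have hrpos : ∀ k, k < p → 1 ≤ rs.getD k 0 := fun k hk => by
    rw [List.getD_eq_getElem _ _ (by omega)]
    exact hpos _ (List.getElem_mem (by omega))
  have hxsne : ∀ x ∈ xs, x ≠ [] := by
    intro x hxm
    obtain ⟨i, hi, rfl⟩ := List.mem_iff_getElem.1 hxm
    have := hxST i (by omega)
    rw [List.getD_eq_getElem _ _ hi] at this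
    exact this.1
  have hmaprk : xs.map rk = rs := by
    apply List.ext_getElem (by simp [hlen, hp])
    intro i h1 h2
    rw [List.getElem_map]
    have := hxrk i (by simp at h1; omega)
    rw [List.getD_eq_getElem _ _ (by simp at h1; omega),
      List.getD_eq_getElem _ _ h2] at this
    exact this
  -- length of z
  have hzlen : z.length = NS xs p := by
    rw [hzdef, wcomp_length, catAll_length, ← hlen, NS_top]
  -- value of z at a block position
  have hzval : ∀ k, k < p → ∀ t, t < (xs.getD k []).length →
      z.getD (NS xs k + t) 0 = ent f (SS rs k + (xs.getD k []).getD t 0) := by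
    intro k hk t ht
    have hidx : NS xs k + t < (catAll xs).length := by
      rw [catAll_length, ← NS_top]
      have h1 := NS_succ (xs := xs) (k := k) (by omega)
      have h2 := NS_mono xs (show k + 1 ≤ xs.length by omega)
      omega
    rw [hzdef, wcomp_getD hidx]
    rw [show (NS xs k + t) = ((xs.take k).map List.length).sum + t from rfl]
    rw [catAll_getD hxsne (by omega) ht]
    rw [show ((xs.take k).map rk).sum = SS rs k by
      rw [List.map_take, hmaprk]; rfl]
    rw [Nat.add_comm]
  -- entries of f are at most M
  have hent_le : ∀ v, ent f v ≤ M := by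
    intro v
    rw [ent, ← hfrk]
    exact getD_le_rk f (v - 1)
  -- SS facts
  have hSsucc : ∀ k, k < p → SS rs (k+1) = SS rs k + rs.getD k 0 := fun k hk =>
    sum_take_succ' rs hk
  have hSmono : ∀ {k k'}, k ≤ k' → SS rs k ≤ SS rs k' := fun h => sum_take_mono rs h
  have hStop : SS rs p = rs.sum := by rw [SS, List.take_of_length_le (by omega)]
  -- M characterization on a block
  have hMiff : ∀ k, k < p → ∀ w, 1 ≤ w → w ≤ rs.getD k 0 →
      (ent f (SS rs k + w) = M ↔ w = rs.getD k 0) := by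
    intro k hk w h1 h2
    have hbound : SS rs k + w ≤ rs.sum := by
      have := hSsucc k hk
      have := hSmono (show k + 1 ≤ p by omega)
      omega
    constructor
    · intro he
      obtain ⟨l, hl, hle⟩ := (hfmax (SS rs k + w) (by omega) hbound).1 he
      have hle' : SS rs k + w = SS rs (l+1) := hle
      rcases Nat.lt_trichotomy l k with h | h | h
      · have := hSmono (show l + 1 ≤ k by omega)
        omega
      · rw [h] at hle'
        have := hSsucc k hk
        omega
      · have h3 : SS rs (k+1) < SS rs (k+2) := sum_take_lt rs hpos (by omega) (by omega)
        have h4 := hSmono (show k + 2 ≤ l + 1 by omega)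
        have := hSsucc k hk
        omega
    · intro he
      apply (hfmax (SS rs k + w) (by omega) hbound).2
      exact ⟨k, hk, by rw [he, ← hSsucc k hk]; rfl⟩
  -- the rank of z is M
  have hzrk : rk z = M := by
    apply rk_eq_of
    · intro a ha
      rw [hzdef, wcomp] at ha
      obtain ⟨v, _, rfl⟩ := List.mem_map.1 ha
      exact hent_le v
    · have hx0 := hxST 0 hp1
      obtain ⟨t, ht, hte⟩ := hx0.exists_getD hx0.one_le_rk le_rfl
      have hv := hzval 0 hp1 t ht
      rw [hte, hxrk 0 hp1] at hv
      have h0 : SS rs 0 = 0 := rfl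
      have hMv : ent f (SS rs 0 + rs.getD 0 0) = M :=
        (hMiff 0 hp1 _ (hrpos 0 hp1) le_rfl).2 rfl
      refine mem_of_getD (i := NS xs 0 + t) ?_ (by rw [hv, hMv])
      have h1 : NS xs 1 = NS xs 0 + (xs.getD 0 []).length := NS_succ (by omega)
      have h2 := NS_mono xs hp1
      have h3 : NS xs 0 = 0 := rfl
      omega
  -- max positions of z in each factor range
  have hF1 : ∀ j, ∃ i, j < q → (NS ys j ≤ i ∧ i < NS ys (j+1) ∧ z.getD i 0 = M) := by
    intro j
    by_cases hj : j < q
    · obtain ⟨i, h1, h2, h3⟩ := dot_max_in_range hysST (j := j) (by omega)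
      rw [← heq] at h3
      rw [hzrk] at h3
      exact ⟨i, fun _ => ⟨by rw [NS_eq]; exact h1, by rw [NS_eq]; exact h2, h3⟩⟩
    · exact ⟨0, fun h => absurd h hj⟩
  choose I hI using hF1
  -- block of each max position
  have hBex : ∀ j, ∃ k, j < q → (k < p ∧ NS xs k ≤ I j ∧ I j < NS xs (k+1)) := by
    intro j
    by_cases hj : j < q
    · obtain ⟨h1, h2, h3⟩ := hI j hj
      have hIlt : I j < NS xs p := by
        have := NS_mono ys (show j + 1 ≤ q by omega)
        have hyt : NS ys q = z.length := by
          rw [NS_top, heq, len_dotAll hys]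
        omega
      have hfind : ∃ l, I j < NS xs (l+1) := ⟨p - 1, by rw [show p - 1 + 1 = p by omega]; exact hIlt⟩
      refine ⟨Nat.find hfind, fun _ => ⟨?_, ?_, Nat.find_spec hfind⟩⟩
      · have := Nat.find_min' hfind (m := p - 1)
          (by rw [show p - 1 + 1 = p by omega]; exact hIlt)
        omega
      · rcases Nat.eq_zero_or_pos (Nat.find hfind) with h0 | h0
        · rw [h0]; exact Nat.zero_le _
        · have := Nat.find_min hfind (show Nat.find hfind - 1 < Nat.find hfind by omega)
          rw [show Nat.find hfind - 1 + 1 = Nat.find hfind by omega] at this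
          omega
    · exact ⟨0, fun h => absurd h hj⟩
  choose K hK using hBex
  -- pigeonhole: two consecutive max positions in the same block
  have hImono : ∀ j j', j < j' → j' < q → I j < I j' := by
    intro j j' h hq'
    have h1 := (hI j (by omega)).2.1
    have h2 := NS_mono ys (show j + 1 ≤ j' by omega)
    have h3 := (hI j' hq').1
    omega
  have hKmono : ∀ j j', j ≤ j' → j' < q → K j ≤ K j' := by
    intro j j' h hq'
    rcases Nat.eq_or_lt_of_le h with rfl | h
    · exact le_rfl
    by_contra hgt
    push_neg at hgt
    have h1 := (hK j (by omega)).2.1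
    have h2 := (hK j' hq').2.2
    have h3 := NS_mono xs (show K j' + 1 ≤ K j by omega)
    have h4 := hImono j j' h hq'
    omega
  have hpig : ∃ j, j + 1 < q ∧ K j = K (j+1) := by
    by_contra hcon
    push_neg at hcon
    have hstep : ∀ j, j + 1 < q → K j + 1 ≤ K (j+1) := by
      intro j h
      have := hKmono j (j+1) (by omega) h
      have := hcon j h
      omega
    have hind : ∀ j, j < q → j ≤ K j := by
      intro j
      induction j with
      | zero => omega
      | succ j ih =>
        intro h
        have := hstep j h
        have := ih (by omega)
        omega
    have h1 := hind (q-1) (by omega)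
    have h2 := (hK (q-1) (by omega)).1
    omega
  obtain ⟨j, hjq, hjK⟩ := hpig
  -- the cut between factors j and j+1 lies strictly inside block k
  obtain ⟨k, hkdef⟩ : ∃ k, k = K j := ⟨_, rfl⟩
  have hjq0 : j < q := by omega
  obtain ⟨hkp, hNk1, hNk2⟩ := hK j hjq0
  obtain ⟨-, hNk1', hNk2'⟩ := hK (j+1) hjq
  rw [← hjK] at hNk1' hNk2'
  rw [← hkdef] at hkp hNk1 hNk2 hNk1' hNk2'
  obtain ⟨hIj1, hIj2, hIj3⟩ := hI j hjq0
  obtain ⟨hIj1', hIj2', hIj3'⟩ := hI (j+1) hjq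
  obtain ⟨xk, hxkdef⟩ : ∃ l, l = xs.getD k [] := ⟨_, rfl⟩
  obtain ⟨r, hrdef⟩ : ∃ r, r = rs.getD k 0 := ⟨_, rfl⟩
  have hxkST : IsST xk := by rw [hxkdef]; exact hxST k hkp
  have hxkrk : rk xk = r := by rw [hxkdef, hrdef]; exact hxrk k hkp
  have hr1 : 1 ≤ r := by rw [hrdef]; exact hrpos k hkp
  have hNsu : NS xs (k+1) = NS xs k + xk.length := by
    rw [hxkdef]; exact NS_succ (by omega)
  obtain ⟨m, hmdef⟩ : ∃ m, m = NS ys (j+1) - NS xs k := ⟨_, rfl⟩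
  have hm1 : 1 ≤ m := by omega
  have hm2 : m < xk.length := by omega
  -- the cut data from the dot factorization
  obtain ⟨a, ha1, ha2, Hlt, Hge⟩ := dot_cut hysST (j := j+1) (by omega) (by omega)
  rw [← heq] at ha2 Hlt Hge
  rw [hzrk] at ha2 Hlt
  rw [← NS_eq ys (j+1)] at Hlt Hge
  -- monotonicity of f on block k, and the threshold c
  have hSd1 : SS rs k = (rs.take k).sum := rfl
  have hSd2 : SS rs (k+1) = (rs.take (k+1)).sum := rfl
  have hSk : SS rs (k+1) = SS rs k + r := by rw [hrdef]; exact hSsucc k hkp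
  have hg : ∀ w w', 1 ≤ w → w < w' → w' ≤ r →
      ent f (SS rs k + w) < ent f (SS rs k + w') := fun w w' h1 h2 h3 =>
    hfbi k (by omega) _ _ (by omega) (by omega) (by omega)
  have hMiffk : ∀ w, 1 ≤ w → w ≤ r → (ent f (SS rs k + w) = M ↔ w = r) := by
    rw [hrdef]; exact hMiff k hkp
  have hgmax : ent f (SS rs k + r) = M := (hMiffk r hr1 le_rfl).2 rfl
  have hcex : ∃ w, 1 ≤ w ∧ w ≤ r ∧ a ≤ ent f (SS rs k + w) :=
    ⟨r, hr1, le_rfl, by omega⟩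
  obtain ⟨c, hcdef⟩ : ∃ c, c = Nat.find hcex := ⟨_, rfl⟩
  have hcsp : 1 ≤ c ∧ c ≤ r ∧ a ≤ ent f (SS rs k + c) := by
    rw [hcdef]; exact Nat.find_spec hcex
  have hciff : ∀ w, 1 ≤ w → w ≤ r → (ent f (SS rs k + w) < a ↔ w < c) := by
    intro w h1 h2
    constructor
    · intro hlt
      by_contra hge
      push_neg at hge
      rcases Nat.eq_or_lt_of_le hge with rfl | h
      · omega
      · have := hg c w hcsp.1 h h2
        omega
    · intro hlt
      have hmin := Nat.find_min hcex (show w < Nat.find hcex by omega)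
      push_neg at hmin
      exact hmin h1 h2
  -- block values in z
  have hzk : ∀ t, t < xk.length → z.getD (NS xs k + t) 0 = ent f (SS rs k + xk.getD t 0) := by
    rw [hxkdef]; exact hzval k hkp
  have hentb : ∀ t, t < xk.length → 1 ≤ xk.getD t 0 ∧ xk.getD t 0 ≤ r := by
    intro t ht
    have := hxkST.entry ht
    rw [hxkrk] at this
    exact this
  have hzbound : ∀ t, t < xk.length → NS xs k + t < z.length := by
    intro t ht
    rw [hzlen]
    have := NS_mono xs (show k + 1 ≤ p by omega)
    omega
  -- the four conditions of the decomposition lemma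
  have D3 : ∀ w, 1 ≤ w → w < c → ∀ t, t < xk.length → xk.getD t 0 = w → t < m := by
    intro w h1 h2 t ht he
    by_contra hge
    push_neg at hge
    have hv := hzk t ht
    rw [he] at hv
    have hlt : ent f (SS rs k + w) < a := (hciff w h1 (by omega)).2 h2
    have := Hge (NS xs k + t) (by omega) (hzbound t ht)
    omega
  have D4 : ∀ w, c ≤ w → w < rk xk → ∀ t, t < xk.length → xk.getD t 0 = w → m ≤ t := by
    intro w h1 h2 t ht he
    rw [hxkrk] at h2
    by_contra hlt
    push_neg at hlt
    have hv := hzk t ht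
    rw [he] at hv
    have hge : a ≤ ent f (SS rs k + w) := by
      by_contra hh
      push_neg at hh
      have := (hciff w (by omega) (by omega)).1 hh
      omega
    have hltM : ent f (SS rs k + w) < M := by
      have := hg w r (by omega) h2 le_rfl
      omega
    have := Hlt (NS xs k + t) (by omega)
    omega
  have D5 : ∃ t, t < m ∧ xk.getD t 0 = rk xk := by
    refine ⟨I j - NS xs k, by omega, ?_⟩
    have ht : I j - NS xs k < xk.length := by omega
    have hv := hzk _ ht
    rw [show NS xs k + (I j - NS xs k) = I j by omega, hIj3] at hv
    have hb := hentb _ ht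
    rw [hxkrk]
    exact (hMiffk _ hb.1 hb.2).1 hv.symm
  have D6 : ∃ t, m ≤ t ∧ t < xk.length ∧ xk.getD t 0 = rk xk := by
    refine ⟨I (j+1) - NS xs k, by omega, by omega, ?_⟩
    have ht : I (j+1) - NS xs k < xk.length := by omega
    have hv := hzk _ ht
    rw [show NS xs k + (I (j+1) - NS xs k) = I (j+1) by omega, hIj3'] at hv
    have hb := hentb _ ht
    rw [hxkrk]
    exact (hMiffk _ hb.1 hb.2).1 hv.symm
  obtain ⟨u, v, hu, hv', hxeq⟩ := decomp_of_split hxkST hm1 hm2 hcsp.1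
    (by rw [hxkrk]; exact hcsp.2.1) D3 D4 D5 D6
  refine (hx k hkp).1.2 ⟨u, v, hu, hv', ?_⟩
  rw [← hxkdef]
  exact hxeq

end SurjPerm
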